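/- Let (X,f) be a non-wandering equicontinuous dynamical system. Then every point of X is minimal, i.e., X is a union of minimal sets. -/
import Mathlib


open Set Function

variable {X : Type*}

/-- A `δ`-pseudo-orbit of `f`. -/
def IsPseudoOrbit [MetricSpace X] (f : X → X) (δ : ℝ) (x : ℕ → X) : Prop :=
  ∀ n : ℕ, dist (f (x n)) (x (n + 1)) < δ

/-- `z` ε-traces the sequence `x`. -/
def Traces [MetricSpace X] (f : X → X) (ε : ℝ) (z : X) (x : ℕ → X) : Prop :=
  ∀ n : ℕ, dist (f^[n] z) (x n) < ε

/-- The shadowing property. -/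
def HasShadowing [MetricSpace X] (f : X → X) : Prop :=
  ∀ ε > (0 : ℝ), ∃ δ > (0 : ℝ), ∀ x : ℕ → X, IsPseudoOrbit f δ x → ∃ z : X, Traces f ε z x

/-- The shadowing property of the restriction of `f` to an invariant set `S`. -/
def HasShadowingOn [MetricSpace X] (f : X → X) (S : Set X) : Prop :=
  ∀ ε > (0 : ℝ), ∃ δ > (0 : ℝ), ∀ x : ℕ → X, (∀ n, x n ∈ S) → IsPseudoOrbit f δ x →
    ∃ z ∈ S, Traces f ε z x

/-- Non-wandering point. -/
def NonWanderingPt [TopologicalSpace X] (f : X → X) (x : X) : Prop :=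
  ∀ U ∈ nhds x, ∃ k : ℕ, 1 ≤ k ∧ ∃ y ∈ U, f^[k] y ∈ U

/-- The (forward) orbit of a point. -/
def orbitSet (f : X → X) (x : X) : Set X := Set.range fun n : ℕ => f^[n] x

/-- Recurrent point. -/
def RecurrentPt [TopologicalSpace X] (f : X → X) (x : X) : Prop :=
  ∀ U ∈ nhds x, ∃ k : ℕ, 1 ≤ k ∧ f^[k] x ∈ U

/-- Minimal point: every point of the orbit closure has `x` in its own orbit closure,
i.e. the orbit closure of `x` is a minimal set. -/
def MinimalPt [TopologicalSpace X] (f : X → X) (x : X) : Prop :=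
  ∀ y ∈ closure (orbitSet f x), x ∈ closure (orbitSet f y)

/-- Regularly recurrent point. -/
def RegRecPt [TopologicalSpace X] (f : X → X) (x : X) : Prop :=
  ∀ U ∈ nhds x, ∃ k : ℕ, 1 ≤ k ∧ ∀ n : ℕ, f^[k * n] x ∈ U

/-- Equicontinuity of the family of iterates of `f`. -/
def EquicontinuousMap [MetricSpace X] (f : X → X) : Prop :=
  ∀ ε > (0 : ℝ), ∃ δ > (0 : ℝ), ∀ x y : X, dist x y < δ →
    ∀ n : ℕ, dist (f^[n] x) (f^[n] y) < ε

/-- `u` is a sensitive point of the subsystem on `S`. -/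
def SensitivePtOn [MetricSpace X] (f : X → X) (S : Set X) (u : X) : Prop :=
  ∃ δ > (0 : ℝ), ∀ U ∈ nhds u, ∃ n : ℕ, ∃ a ∈ U ∩ S, ∃ b ∈ U ∩ S,
    dist (f^[n] a) (f^[n] b) > δ

/-- `u` is a sensitive point of `(X,f)`. -/
def SensitivePt [MetricSpace X] (f : X → X) (u : X) : Prop :=
  ∃ δ > (0 : ℝ), ∀ U ∈ nhds u, ∃ n : ℕ, ∃ a ∈ U, ∃ b ∈ U,
    dist (f^[n] a) (f^[n] b) > δ

/-- Topological transitivity. -/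
def TopTransitive {Y : Type*} [TopologicalSpace Y] (g : Y → Y) : Prop :=
  ∀ U V : Set Y, IsOpen U → U.Nonempty → IsOpen V → V.Nonempty →
    ∃ n : ℕ, 1 ≤ n ∧ (g^[n] '' U ∩ V).Nonempty

/-- Weak mixing: the product system is transitive. -/
def WeaklyMixing [TopologicalSpace X] (f : X → X) : Prop :=
  TopTransitive (fun p : X × X => (f p.1, f p.2))

/-- Strong mixing. -/
def StronglyMixing {Y : Type*} [TopologicalSpace Y] (g : Y → Y) : Prop :=
  ∀ U V : Set Y, IsOpen U → U.Nonempty → IsOpen V → V.Nonempty →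
    ∃ N : ℕ, ∀ n ≥ N, (g^[n] '' U ∩ V).Nonempty

/-- The shift map on the full shift over `d` symbols. -/
def shiftMap (d : ℕ) : (ℕ → Fin d) → (ℕ → Fin d) := fun x n => x (n + 1)

/-- `π` is a factor map from the subsystem `(Y, f^[m])` onto the full shift on `d` symbols. -/
def FactorOntoShift [TopologicalSpace X] (f : X → X) (m : ℕ) (Y : Set X) (d : ℕ)
    (π : X → (ℕ → Fin d)) : Prop :=
  ContinuousOn π Y ∧ π '' Y = Set.univ ∧ ∀ y ∈ Y, π (f^[m] y) = shiftMap d (π y)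

lemma exists_return_aux [MetricSpace X] (f : X → X) (hnw : ∀ x : X, NonWanderingPt f x)
    (heq : EquicontinuousMap f) (x : X) {ε : ℝ} (hε : 0 < ε) :
    ∃ k : ℕ, 1 ≤ k ∧ dist (f^[k] x) x < ε := by
  obtain ⟨δ, hδ0, hδ⟩ := heq (ε / 2) (by positivity)
  set δ' := min δ ε with hδ'
  have hδ'0 : 0 < δ' := lt_min hδ0 hε
  obtain ⟨k, hk1, y, hy, hky⟩ := hnw x (Metric.ball x (δ' / 2))
    (Metric.ball_mem_nhds x (by positivity))
  refine ⟨k, hk1, ?_⟩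
  rw [Metric.mem_ball] at hy hky
  have h1 : dist x y < δ := by
    rw [dist_comm]
    calc dist y x < δ' / 2 := hy
      _ ≤ δ := le_trans (by linarith) (min_le_left δ ε)
  have h2 : dist (f^[k] x) (f^[k] y) < ε / 2 := hδ x y h1 k
  have h3 : dist (f^[k] y) x < ε / 2 :=
    lt_of_lt_of_le hky (by have := min_le_right δ ε; linarith)
  calc dist (f^[k] x) x ≤ dist (f^[k] x) (f^[k] y) + dist (f^[k] y) x := dist_triangle _ _ _
    _ < ε / 2 + ε / 2 := by linarith
    _ = ε := by ring

lemma exists_return_ge_aux [MetricSpace X] (f : X → X) (hnw : ∀ x : X, NonWanderingPt f x)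
    (heq : EquicontinuousMap f) (x : X) (N : ℕ) :
    ∀ ε > (0 : ℝ), ∃ n : ℕ, N ≤ n ∧ dist (f^[n] x) x < ε := by
  induction N with
  | zero =>
    intro ε hε
    obtain ⟨k, _, hk⟩ := exists_return_aux f hnw heq x hε
    exact ⟨k, Nat.zero_le _, hk⟩
  | succ N ih =>
    intro ε hε
    obtain ⟨δ, hδ0, hδ⟩ := heq (ε / 2) (by positivity)
    obtain ⟨n, hn, hnd⟩ := ih (min δ (ε / 2)) (by positivity)
    obtain ⟨k, hk1, hkd⟩ := exists_return_aux f hnw heq x (show (0:ℝ) < ε / 2 by positivity)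
    refine ⟨k + n, by omega, ?_⟩
    rw [Function.iterate_add_apply]
    have h1 : dist (f^[k] (f^[n] x)) (f^[k] x) < ε / 2 :=
      hδ _ _ (lt_of_lt_of_le hnd (min_le_left _ _)) k
    calc dist (f^[k] (f^[n] x)) x
        ≤ dist (f^[k] (f^[n] x)) (f^[k] x) + dist (f^[k] x) x := dist_triangle _ _ _
      _ < ε / 2 + ε / 2 := by linarith [lt_of_lt_of_le hnd (min_le_right δ (ε/2))]
      _ = ε := by ring

theorem nonwandering_equicontinuous_all_minimal [MetricSpace X] [CompactSpace X]
    (f : X → X) (hf : Continuous f) (hnw : ∀ x : X, NonWanderingPt f x)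
    (heq : EquicontinuousMap f) :
    ∀ x : X, MinimalPt f x := by
  intro x y hy
  rw [Metric.mem_closure_iff]
  intro ε hε
  obtain ⟨δ, hδ0, hδ⟩ := heq (ε / 2) (by positivity)
  rw [Metric.mem_closure_iff] at hy
  obtain ⟨z, hz, hyz⟩ := hy δ hδ0
  obtain ⟨m, rfl⟩ := hz
  obtain ⟨n, hnm, hnd⟩ := exists_return_ge_aux f hnw heq x m (ε / 2) (by positivity)
  refine ⟨f^[n - m] y, ⟨n - m, rfl⟩, ?_⟩
  have h1 : dist (f^[n - m] y) (f^[n - m] (f^[m] x)) < ε / 2 := hδ _ _ hyz _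
  rw [← Function.iterate_add_apply, Nat.sub_add_cancel hnm] at h1
  calc dist x (f^[n - m] y) ≤ dist x (f^[n] x) + dist (f^[n] x) (f^[n - m] y) :=
        dist_triangle _ _ _
    _ < ε / 2 + ε / 2 := by
        rw [dist_comm x (f^[n] x), dist_comm (f^[n] x) (f^[n - m] y)]
        exact add_lt_add hnd h1
    _ = ε := by ring
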